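/- arXiv:2406.11586 — 2 statements merged into one kernel-verified Lean document; each statement's English description precedes it below -/
import Mathlib

section
/- Let G = (α,β) be a maximum three-species zero-one network whose stoichiometric matrix N has rank 2, with rows N_2, N_3 linearly independent and N_1 = a·N_2 + b·N_3. Let N* be the 2×m matrix formed by rows 2 and 3 of N. Then for every ℓ = (ℓ1, ℓ2) ∈ {−1,0,1}² with ℓ ≠ (0,0): ℓ is a column of N* if and only if a·ℓ1 + b·ℓ2 ∈ {−1, 0, 1}. -/
noncomputable section

/-- The stoichiometric matrix `N = β − α` of a reaction network, as a real matrix. -/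
def stoich {s m : ℕ} (α β : Matrix (Fin s) (Fin m) ℕ) : Matrix (Fin s) (Fin m) ℝ :=
  fun i j => (β i j : ℝ) - (α i j : ℝ)

/-- A three-species zero-one network is maximum if every zero-one reaction on its species whose
stoichiometric vector lies in the column space of the stoichiometric matrix already occurs among
its reactions. -/
def IsMaximum {m : ℕ} (α β : Matrix (Fin 3) (Fin m) ℕ) : Prop :=
  ∀ a' b' : Fin 3 → ℕ, (∀ i, a' i ≤ 1) → (∀ i, b' i ≤ 1) → a' ≠ b' →
    (fun i => (b' i : ℝ) - (a' i : ℝ)) ∈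
      Submodule.span ℝ (Set.range fun j i => stoich α β i j) →
    ∃ j, (∀ i, α i j = a' i) ∧ (∀ i, β i j = b' i)

/-- For a maximum three-species zero-one network of rank two with `N_1 = a·N_2 + b·N_3`:
a nonzero vector `ℓ ∈ {−1,0,1}²` is a column of the submatrix `N*` formed by rows 2 and 3 of `N`
iff `a·ℓ1 + b·ℓ2 ∈ {−1,0,1}`. -/
theorem stmt17 {m : ℕ} (α β : Matrix (Fin 3) (Fin m) ℕ)
    (hnet : ∀ j, ∃ i, α i j ≠ β i j)
    (h01 : ∀ i j, α i j ≤ 1 ∧ β i j ≤ 1)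
    (hmax : IsMaximum α β)
    (hrank : (stoich α β).rank = 2)
    (hind : LinearIndependent ℝ ![stoich α β 1, stoich α β 2])
    (a b : ℝ)
    (hab : ∀ j, stoich α β 0 j = a * stoich α β 1 j + b * stoich α β 2 j) :
    ∀ l1 l2 : ℝ, l1 ∈ ({-1, 0, 1} : Set ℝ) → l2 ∈ ({-1, 0, 1} : Set ℝ) →
      ¬ (l1 = 0 ∧ l2 = 0) →
      ((∃ j, stoich α β 1 j = l1 ∧ stoich α β 2 j = l2) ↔
        a * l1 + b * l2 ∈ ({-1, 0, 1} : Set ℝ)) := by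
  classical
  intro l1 l2 hl1 hl2 hne
  constructor
  · rintro ⟨j, h1, h2⟩
    rw [← h1, ← h2, ← hab j]
    have ha := (h01 0 j).1
    have hb := (h01 0 j).2
    simp only [stoich]
    interval_cases h : (α 0 j) <;> interval_cases h' : (β 0 j) <;>
      simp [Set.mem_insert_iff] <;> norm_num
  · intro hc
    -- column span equals the plane W spanned by (a,1,0) and (b,0,1)
    set w1 : Fin 3 → ℝ := ![a, 1, 0] with hw1
    set w2 : Fin 3 → ℝ := ![b, 0, 1] with hw2
    set S := Submodule.span ℝ (Set.range fun j i => stoich α β i j) with hS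
    set W := Submodule.span ℝ ({w1, w2} : Set (Fin 3 → ℝ)) with hW
    have hSW : S ≤ W := by
      rw [hS, Submodule.span_le]
      rintro _ ⟨j, rfl⟩
      show (fun i => stoich α β i j) ∈ W
      have : (fun i => stoich α β i j) = stoich α β 1 j • w1 + stoich α β 2 j • w2 := by
        funext i
        fin_cases i <;>
          simp [hw1, hw2, hab j, mul_comm]
      rw [this]
      exact W.add_mem (W.smul_mem _ (Submodule.subset_span (Set.mem_insert _ _)))
        (W.smul_mem _ (Submodule.subset_span (Set.mem_insert_of_mem _ rfl)))
    have hfinS : Module.finrank ℝ S = 2 := by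
      have := hrank
      rw [Matrix.rank, Matrix.range_mulVecLin] at this
      exact this
    have hfinW : Module.finrank ℝ W ≤ 2 := by
      have hset : ({w1, w2} : Set (Fin 3 → ℝ)) = Set.range ![w1, w2] := by
        ext x
        simp [Matrix.range_cons, Matrix.range_empty, or_comm]
      rw [hW, hset]
      have h2 := finrank_range_le_card (R := ℝ) ![w1, w2]
      unfold Set.finrank at h2
      simpa using h2
    haveI : FiniteDimensional ℝ W :=
      FiniteDimensional.span_of_finite ℝ (by simp : ({w1, w2} : Set (Fin 3 → ℝ)).Finite)
    have hSeqW : S = W := Submodule.eq_of_le_of_finrank_le hSW (by rw [hfinS]; exact hfinW)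
    -- the candidate vector
    set v : Fin 3 → ℝ := ![a * l1 + b * l2, l1, l2] with hv
    have hvW : v ∈ W := by
      have : v = l1 • w1 + l2 • w2 := by
        funext i; fin_cases i <;> simp [hv, hw1, hw2, mul_comm]
      rw [this]
      exact W.add_mem (W.smul_mem _ (Submodule.subset_span (Set.mem_insert _ _)))
        (W.smul_mem _ (Submodule.subset_span (Set.mem_insert_of_mem _ rfl)))
    have hvS : v ∈ S := by rw [hSeqW]; exact hvW
    have hvmem : ∀ i, v i ∈ ({-1, 0, 1} : Set ℝ) := by
      intro i; fin_cases i
      · simpa [hv] using hc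
      · simpa [hv] using hl1
      · simpa [hv] using hl2
    set a' : Fin 3 → ℕ := fun i => if v i = -1 then 1 else 0 with ha'
    set b' : Fin 3 → ℕ := fun i => if v i = 1 then 1 else 0 with hb'
    have hdiff : ∀ i, (b' i : ℝ) - (a' i : ℝ) = v i := by
      intro i
      have h3 := hvmem i
      simp only [Set.mem_insert_iff, Set.mem_singleton_iff] at h3
      rcases h3 with h | h | h <;> norm_num [ha', hb', h]
    have hane : a' ≠ b' := by
      intro h
      have h12 : l1 ≠ 0 ∨ l2 ≠ 0 := by tauto
      rcases h12 with h' | h'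
      · have := hdiff 1
        rw [h] at this
        simp [hv] at this
        exact h' this.symm
      · have := hdiff 2
        rw [h] at this
        simp [hv] at this
        exact h' this.symm
    have hmem : (fun i => (b' i : ℝ) - (a' i : ℝ)) ∈ S := by
      have : (fun i => (b' i : ℝ) - (a' i : ℝ)) = v := funext hdiff
      rw [this]; exact hvS
    obtain ⟨j, hαj, hβj⟩ := hmax a' b'
      (fun i => by simp only [ha']; split <;> simp)
      (fun i => by simp only [hb']; split <;> simp)
      hane hmem
    refine ⟨j, ?_, ?_⟩
    · have : stoich α β 1 j = (b' 1 : ℝ) - (a' 1 : ℝ) := by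
        simp [stoich, hαj 1, hβj 1]
      rw [this, hdiff 1]; simp [hv]
    · have : stoich α β 2 j = (b' 2 : ℝ) - (a' 2 : ℝ) := by
        simp [stoich, hαj 2, hβj 2]
      rw [this, hdiff 2]; simp [hv]
end
end

section
/- Consider the mass-action system in x = (x1,x2,x3) with f1 = −κ1·x1·x2·x3 + κ2, f2 = −κ1·x1·x2·x3 − κ3·x1·x2 + κ4·x1·x3 − κ5·x2 + κ6·x3 + κ2, f3 = −κ1·x1·x2·x3 + κ3·x1·x2 − κ4·x1·x3 + κ5·x2 − κ6·x3 + κ2, arising from the zero-one network X1+X2+X3 ⇌ 0, X1+X2 ⇌ X1+X3, X2 ⇌ X3 (with rate constants κ1,…,κ6). For every κ ∈ ℝ⁶_{>0} and every c ∈ ℝ, there is exactly one point x ∈ ℝ³_{>0} satisfying x1 = (1/2)·x2 + (1/2)·x3 + c and f(κ,x) = 0; moreover, at this point the Jacobian with respect to (x1,x2,x3) of the map x ↦ (x1 − (1/2)x2 − (1/2)x3 − c, f2(κ,x), f3(κ,x)) is nonsingular. -/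
noncomputable section

/-- The species-formation rate function of the zero-one network
`X1+X2+X3 ⇌ 0, X1+X2 ⇌ X1+X3, X2 ⇌ X3` with rate constants `κ1,…,κ6`. -/
def f19 (κ : Fin 6 → ℝ) (x : Fin 3 → ℝ) : Fin 3 → ℝ :=
  ![-(κ 0) * x 0 * x 1 * x 2 + κ 1,
    -(κ 0) * x 0 * x 1 * x 2 - κ 2 * x 0 * x 1 + κ 3 * x 0 * x 2 - κ 4 * x 1 + κ 5 * x 2 + κ 1,
    -(κ 0) * x 0 * x 1 * x 2 + κ 2 * x 0 * x 1 - κ 3 * x 0 * x 2 + κ 4 * x 1 - κ 5 * x 2 + κ 1]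

/-- The steady-state system augmented by the conservation law `x1 = (1/2)x2 + (1/2)x3 + c`. -/
def h19 (κ : Fin 6 → ℝ) (c : ℝ) (x : Fin 3 → ℝ) : Fin 3 → ℝ :=
  ![x 0 - (1 / 2) * x 1 - (1 / 2) * x 2 - c, f19 κ x 1, f19 κ x 2]

/-- The Jacobian matrix of `h19` with respect to `x`. -/
def jacH19 (κ : Fin 6 → ℝ) (c : ℝ) (x : Fin 3 → ℝ) : Matrix (Fin 3) (Fin 3) ℝ :=
  fun i l => deriv (fun t => h19 κ c (Function.update x l t) i) (x l)

/-- auxiliary: derivative of an affine function -/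
lemma deriv_affine19 (p q t : ℝ) : deriv (fun s => p * s + q) t = p := by
  simpa using (((hasDerivAt_id t).const_mul p).add_const q).deriv

/-- auxiliary rational function whose roots are the steady states -/
def φq (κ : Fin 6 → ℝ) (c a : ℝ) : ℝ :=
  4 * κ 0 * a * (a - c) ^ 2 * ((κ 3 * a + κ 5) * (κ 2 * a + κ 4)) /
    ((κ 3 * a + κ 5) + (κ 2 * a + κ 4)) ^ 2 - κ 1

lemma phi_mono (κ : Fin 6 → ℝ) (hκ : ∀ j, 0 < κ j) (c : ℝ) :
    StrictMonoOn (φq κ c) (Set.Ici (max c 0)) := by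
  have hk0 := hκ 0; have hk1 := hκ 1; have hk2 := hκ 2
  have hk3 := hκ 3; have hk4 := hκ 4; have hk5 := hκ 5
  apply strictMonoOn_of_deriv_pos (convex_Ici _)
  · apply ContinuousOn.sub _ continuousOn_const
    apply ContinuousOn.div (by fun_prop) (by fun_prop)
    intro a ha
    have ha0 : (0:ℝ) ≤ a := le_trans (le_max_right c 0) ha
    have hS : 0 < (κ 3 * a + κ 5) + (κ 2 * a + κ 4) := by nlinarith
    exact (pow_pos hS 2).ne'
  · rw [interior_Ici]
    intro a ha
    have ha0 : 0 < a := lt_of_le_of_lt (le_max_right c 0) ha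
    have hac : c < a := lt_of_le_of_lt (le_max_left c 0) ha
    have hd : 0 < a - c := sub_pos.2 hac
    have hA : 0 < κ 3 * a + κ 5 := by nlinarith
    have hB : 0 < κ 2 * a + κ 4 := by nlinarith
    have hS : 0 < (κ 3 * a + κ 5) + (κ 2 * a + κ 4) := by linarith
    have hdA : HasDerivAt (fun y : ℝ => κ 3 * y + κ 5) (κ 3) a := by
      simpa using ((hasDerivAt_id a).const_mul (κ 3)).add_const (κ 5)
    have hdB : HasDerivAt (fun y : ℝ => κ 2 * y + κ 4) (κ 2) a := by
      simpa using ((hasDerivAt_id a).const_mul (κ 2)).add_const (κ 4)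
    have hN := (((hasDerivAt_id a).const_mul (4 * κ 0)).mul
      (((hasDerivAt_id a).sub_const c).pow 2)).mul (hdA.mul hdB)
    have hD := (hdA.add hdB).pow 2
    have hφ := (hN.div hD (pow_pos hS 2).ne').sub_const (κ 1)
    have hderiv : deriv (φq κ c) a = _ := hφ.deriv
    rw [hderiv]
    simp only [id_eq]
    apply div_pos
    · have h1 : 0 < (κ 3 * a + κ 5) * (κ 2 * a + κ 4) := mul_pos hA hB
      have h2 : 0 < ((κ 3 * a + κ 5) * (κ 2 * a + κ 4)) * (κ 4 + κ 5)
          + a * κ 2 * (κ 3 * a + κ 5) ^ 2 + a * κ 3 * (κ 2 * a + κ 4) ^ 2 := by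
        have e1 := mul_pos (mul_pos ha0 hk2) (pow_pos hA 2)
        have e2 := mul_pos (mul_pos ha0 hk3) (pow_pos hB 2)
        have e3 := mul_pos h1 (add_pos hk4 hk5)
        linarith
      have h3 : 0 < (a - c) * (((κ 3 * a + κ 5) * (κ 2 * a + κ 4)) * (κ 4 + κ 5)
          + a * κ 2 * (κ 3 * a + κ 5) ^ 2 + a * κ 3 * (κ 2 * a + κ 4) ^ 2)
          + 2 * a * ((κ 3 * a + κ 5) * (κ 2 * a + κ 4)) * ((κ 3 * a + κ 5) + (κ 2 * a + κ 4)) :=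
        add_pos (mul_pos hd h2)
          (mul_pos (mul_pos (by linarith : (0:ℝ) < 2 * a) h1) hS)
      have hpos : 0 < 4 * κ 0 * (a - c) * ((κ 3 * a + κ 5) + (κ 2 * a + κ 4)) *
          ((a - c) * (((κ 3 * a + κ 5) * (κ 2 * a + κ 4)) * (κ 4 + κ 5)
              + a * κ 2 * (κ 3 * a + κ 5) ^ 2 + a * κ 3 * (κ 2 * a + κ 4) ^ 2)
            + 2 * a * ((κ 3 * a + κ 5) * (κ 2 * a + κ 4)) * ((κ 3 * a + κ 5) + (κ 2 * a + κ 4))) :=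
        mul_pos (mul_pos (mul_pos (by linarith : (0:ℝ) < 4 * κ 0) hd) hS) h3
      exact lt_of_lt_of_eq hpos (by simp only [Pi.mul_apply, Pi.add_apply, Pi.pow_apply, Pi.sub_apply]; ring)
    · exact pow_pos (pow_pos hS 2) 2

lemma jac19_00 (κ : Fin 6 → ℝ) (c : ℝ) (x : Fin 3 → ℝ) :
    jacH19 κ c x 0 0 = (1:ℝ) := by
  simp only [jacH19]
  rw [show (fun t => h19 κ c (Function.update x 0 t) 0) = (fun t => ((1:ℝ)) * t + (-(1/2) * x 1 - (1/2) * x 2 - c))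
    from funext fun t => by simp [h19, f19, Function.update_apply]; ring, deriv_affine19]

lemma jac19_01 (κ : Fin 6 → ℝ) (c : ℝ) (x : Fin 3 → ℝ) :
    jacH19 κ c x 0 1 = (-(1/2) : ℝ) := by
  simp only [jacH19]
  rw [show (fun t => h19 κ c (Function.update x 1 t) 0) = (fun t => ((-(1/2) : ℝ)) * t + (x 0 - (1/2) * x 2 - c))
    from funext fun t => by simp [h19, f19, Function.update_apply]; ring, deriv_affine19]

lemma jac19_02 (κ : Fin 6 → ℝ) (c : ℝ) (x : Fin 3 → ℝ) :
    jacH19 κ c x 0 2 = (-(1/2) : ℝ) := by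
  simp only [jacH19]
  rw [show (fun t => h19 κ c (Function.update x 2 t) 0) = (fun t => ((-(1/2) : ℝ)) * t + (x 0 - (1/2) * x 1 - c))
    from funext fun t => by simp [h19, f19, Function.update_apply]; ring, deriv_affine19]

lemma jac19_10 (κ : Fin 6 → ℝ) (c : ℝ) (x : Fin 3 → ℝ) :
    jacH19 κ c x 1 0 = -(κ 0) * x 1 * x 2 - κ 2 * x 1 + κ 3 * x 2 := by
  simp only [jacH19]
  rw [show (fun t => h19 κ c (Function.update x 0 t) 1) = (fun t => (-(κ 0) * x 1 * x 2 - κ 2 * x 1 + κ 3 * x 2) * t + (-(κ 4) * x 1 + κ 5 * x 2 + κ 1))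
    from funext fun t => by simp [h19, f19, Function.update_apply]; ring, deriv_affine19]

lemma jac19_11 (κ : Fin 6 → ℝ) (c : ℝ) (x : Fin 3 → ℝ) :
    jacH19 κ c x 1 1 = -(κ 0) * x 0 * x 2 - κ 2 * x 0 - κ 4 := by
  simp only [jacH19]
  rw [show (fun t => h19 κ c (Function.update x 1 t) 1) = (fun t => (-(κ 0) * x 0 * x 2 - κ 2 * x 0 - κ 4) * t + (κ 3 * x 0 * x 2 + κ 5 * x 2 + κ 1))
    from funext fun t => by simp [h19, f19, Function.update_apply]; ring, deriv_affine19]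

lemma jac19_12 (κ : Fin 6 → ℝ) (c : ℝ) (x : Fin 3 → ℝ) :
    jacH19 κ c x 1 2 = -(κ 0) * x 0 * x 1 + κ 3 * x 0 + κ 5 := by
  simp only [jacH19]
  rw [show (fun t => h19 κ c (Function.update x 2 t) 1) = (fun t => (-(κ 0) * x 0 * x 1 + κ 3 * x 0 + κ 5) * t + (-(κ 2) * x 0 * x 1 - κ 4 * x 1 + κ 1))
    from funext fun t => by simp [h19, f19, Function.update_apply]; ring, deriv_affine19]

lemma jac19_20 (κ : Fin 6 → ℝ) (c : ℝ) (x : Fin 3 → ℝ) :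
    jacH19 κ c x 2 0 = -(κ 0) * x 1 * x 2 + κ 2 * x 1 - κ 3 * x 2 := by
  simp only [jacH19]
  rw [show (fun t => h19 κ c (Function.update x 0 t) 2) = (fun t => (-(κ 0) * x 1 * x 2 + κ 2 * x 1 - κ 3 * x 2) * t + (κ 4 * x 1 - κ 5 * x 2 + κ 1))
    from funext fun t => by simp [h19, f19, Function.update_apply]; ring, deriv_affine19]

lemma jac19_21 (κ : Fin 6 → ℝ) (c : ℝ) (x : Fin 3 → ℝ) :
    jacH19 κ c x 2 1 = -(κ 0) * x 0 * x 2 + κ 2 * x 0 + κ 4 := by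
  simp only [jacH19]
  rw [show (fun t => h19 κ c (Function.update x 1 t) 2) = (fun t => (-(κ 0) * x 0 * x 2 + κ 2 * x 0 + κ 4) * t + (-(κ 3) * x 0 * x 2 - κ 5 * x 2 + κ 1))
    from funext fun t => by simp [h19, f19, Function.update_apply]; ring, deriv_affine19]

lemma jac19_22 (κ : Fin 6 → ℝ) (c : ℝ) (x : Fin 3 → ℝ) :
    jacH19 κ c x 2 2 = -(κ 0) * x 0 * x 1 - κ 3 * x 0 - κ 5 := by
  simp only [jacH19]
  rw [show (fun t => h19 κ c (Function.update x 2 t) 2) = (fun t => (-(κ 0) * x 0 * x 1 - κ 3 * x 0 - κ 5) * t + (κ 2 * x 0 * x 1 + κ 4 * x 1 + κ 1))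
    from funext fun t => by simp [h19, f19, Function.update_apply]; ring, deriv_affine19]

/-- For every positive rate-constant vector and every `c`, the network has exactly one positive
steady state in the class `{x > 0 : x1 = (1/2)x2 + (1/2)x3 + c}`, and at this steady state the
Jacobian of the augmented system is nonsingular. -/
theorem stmt19 (κ : Fin 6 → ℝ) (hκ : ∀ j, 0 < κ j) (c : ℝ) :
    ∃ x : Fin 3 → ℝ,
      ((∀ i, 0 < x i) ∧ x 0 = (1 / 2) * x 1 + (1 / 2) * x 2 + c ∧
        (∀ i, f19 κ x i = 0)) ∧
      (jacH19 κ c x).det ≠ 0 ∧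
      (∀ y : Fin 3 → ℝ,
        ((∀ i, 0 < y i) ∧ y 0 = (1 / 2) * y 1 + (1 / 2) * y 2 + c ∧
          (∀ i, f19 κ y i = 0)) → y = x) := by
  have hk0 := hκ 0; have hk1 := hκ 1; have hk2 := hκ 2
  have hk3 := hκ 3; have hk4 := hκ 4; have hk5 := hκ 5
  obtain ⟨m, hm⟩ : ∃ m, m = max c 0 := ⟨_, rfl⟩
  have hm0 : (0:ℝ) ≤ m := hm ▸ le_max_right c 0
  have hmc : c ≤ m := hm ▸ le_max_left c 0
  have hmono : StrictMonoOn (φq κ c) (Set.Ici m) := hm ▸ phi_mono κ hκ c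
  have hcont : ContinuousOn (φq κ c) (Set.Ici m) := by
    apply ContinuousOn.sub _ continuousOn_const
    apply ContinuousOn.div (by fun_prop) (by fun_prop)
    intro a ha
    have ha0 : (0:ℝ) ≤ a := le_trans hm0 ha
    have hS : 0 < (κ 3 * a + κ 5) + (κ 2 * a + κ 4) := by nlinarith
    exact (pow_pos hS 2).ne'
  have hφm : φq κ c m = -κ 1 := by
    rcases le_total c 0 with h | h
    · rw [hm, max_eq_right h]; simp [φq]
    · rw [hm, max_eq_left h]; simp [φq]
  -- a point where φq is positive
  obtain ⟨b, hb⟩ : ∃ b, b = m + 1 + (κ 4 + κ 5) / (κ 2 + κ 3) + κ 1 * (κ 2 + κ 3) ^ 2 / (κ 0 * κ 2 * κ 3) := ⟨_, rfl⟩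
  have hq1 : (0:ℝ) ≤ (κ 4 + κ 5) / (κ 2 + κ 3) := by positivity
  have hq2 : (0:ℝ) ≤ κ 1 * (κ 2 + κ 3) ^ 2 / (κ 0 * κ 2 * κ 3) := by positivity
  have hmb : m ≤ b := by rw [hb]; linarith
  have hb1 : (1:ℝ) ≤ b := by rw [hb]; linarith
  have hb0 : (0:ℝ) < b := by linarith
  have hbc : c + 1 ≤ b := by rw [hb]; linarith
  have hb2 : κ 4 + κ 5 ≤ (κ 2 + κ 3) * b := by
    have h1 : (κ 4 + κ 5) / (κ 2 + κ 3) ≤ b := by rw [hb]; linarith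
    rw [div_le_iff₀ (by linarith)] at h1
    linarith [h1]
  have hb3 : κ 1 * (κ 2 + κ 3) ^ 2 < κ 0 * κ 2 * κ 3 * b := by
    have h1 : κ 1 * (κ 2 + κ 3) ^ 2 / (κ 0 * κ 2 * κ 3) + 1 ≤ b := by rw [hb]; linarith
    have h2 : κ 0 * κ 2 * κ 3 * (κ 1 * (κ 2 + κ 3) ^ 2 / (κ 0 * κ 2 * κ 3)) = κ 1 * (κ 2 + κ 3) ^ 2 := by
      field_simp
    have h3 := mul_le_mul_of_nonneg_left h1 (le_of_lt (mul_pos (mul_pos hk0 hk2) hk3))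
    linarith [mul_pos (mul_pos hk0 hk2) hk3, h3, h2]
  have hSb : 0 < (κ 3 * b + κ 5) + (κ 2 * b + κ 4) := by
    linarith [mul_pos hk3 hb0, mul_pos hk2 hb0]
  have hφb : 0 < φq κ c b := by
    rw [φq, sub_pos, lt_div_iff₀ (pow_pos hSb 2)]
    have hST : (κ 3 * b + κ 5) + (κ 2 * b + κ 4) ≤ 2 * ((κ 2 + κ 3) * b) := by linarith [hb2]
    have e1 : κ 1 * ((κ 3 * b + κ 5) + (κ 2 * b + κ 4)) ^ 2 ≤ κ 1 * (2 * ((κ 2 + κ 3) * b)) ^ 2 :=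
      mul_le_mul_of_nonneg_left (pow_le_pow_left₀ (by linarith) hST 2) hk1.le
    have e2 : (1:ℝ) ≤ (b - c) ^ 2 := by
      have h6 : (1:ℝ) * 1 ≤ (b - c) * (b - c) :=
        mul_le_mul (by linarith) (by linarith) (by norm_num) (by linarith)
      linarith [h6]
    have e3 : κ 1 * (2 * ((κ 2 + κ 3) * b)) ^ 2 < 4 * κ 0 * b * (1 * ((κ 3 * b) * (κ 2 * b))) := by
      have h5 := mul_lt_mul_of_pos_left hb3 (by positivity : (0:ℝ) < 4 * b ^ 2)
      linarith [h5]
    have e4 : 4 * κ 0 * b * (1 * ((κ 3 * b) * (κ 2 * b)))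
        ≤ 4 * κ 0 * b * ((b - c) ^ 2 * ((κ 3 * b + κ 5) * (κ 2 * b + κ 4))) := by
      apply mul_le_mul_of_nonneg_left _ (by positivity)
      apply mul_le_mul e2 _ (by positivity) (by positivity)
      have h7 := mul_le_mul (le_refl (κ 3 * b)) (by linarith : κ 2 * b ≤ κ 2 * b + κ 4)
        (by positivity) (by positivity : (0:ℝ) ≤ κ 3 * b)
      have h8 := mul_le_mul (by linarith : κ 3 * b ≤ κ 3 * b + κ 5) (le_refl (κ 2 * b + κ 4))
        (by positivity) (by positivity : (0:ℝ) ≤ κ 3 * b + κ 5)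
      linarith [h7, h8]
    calc κ 1 * ((κ 3 * b + κ 5) + (κ 2 * b + κ 4)) ^ 2
        ≤ κ 1 * (2 * ((κ 2 + κ 3) * b)) ^ 2 := e1
      _ < 4 * κ 0 * b * (1 * ((κ 3 * b) * (κ 2 * b))) := e3
      _ ≤ 4 * κ 0 * b * ((b - c) ^ 2 * ((κ 3 * b + κ 5) * (κ 2 * b + κ 4))) := e4
      _ = 4 * κ 0 * b * (b - c) ^ 2 * ((κ 3 * b + κ 5) * (κ 2 * b + κ 4)) := by ring
  -- root of φq by IVT
  obtain ⟨a, haI, hφa⟩ : ∃ a ∈ Set.Icc m b, φq κ c a = 0 := by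
    have hsub : Set.Icc m b ⊆ Set.Ici m := Set.Icc_subset_Ici_self
    have := intermediate_value_Icc hmb (hcont.mono hsub)
    have h0 : (0:ℝ) ∈ Set.Icc (φq κ c m) (φq κ c b) := by
      constructor
      · rw [hφm]; linarith
      · exact hφb.le
    obtain ⟨a, ha, ha'⟩ := this h0
    exact ⟨a, ha, ha'⟩
  have ham : m < a := by
    rcases eq_or_lt_of_le haI.1 with h | h
    · exfalso; rw [← h, hφm] at hφa; linarith
    · exact h
  have ha0 : 0 < a := lt_of_le_of_lt hm0 ham
  have hac : c < a := lt_of_le_of_lt hmc ham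
  have hd : 0 < a - c := sub_pos.2 hac
  have hA : 0 < κ 3 * a + κ 5 := by linarith [mul_pos hk3 ha0]
  have hB : 0 < κ 2 * a + κ 4 := by linarith [mul_pos hk2 ha0]
  have hS : 0 < (κ 3 * a + κ 5) + (κ 2 * a + κ 4) := by linarith
  obtain ⟨X1, hX1⟩ : ∃ X1, X1 = 2 * (a - c) * (κ 3 * a + κ 5) / ((κ 3 * a + κ 5) + (κ 2 * a + κ 4)) := ⟨_, rfl⟩
  obtain ⟨X2, hX2⟩ : ∃ X2, X2 = 2 * (a - c) * (κ 2 * a + κ 4) / ((κ 3 * a + κ 5) + (κ 2 * a + κ 4)) := ⟨_, rfl⟩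
  have hX1p : 0 < X1 := by
    rw [hX1]; exact div_pos (by linarith [mul_pos hd hA]) hS
  have hX2p : 0 < X2 := by
    rw [hX2]; exact div_pos (by linarith [mul_pos hd hB]) hS
  have hsum : X1 + X2 = 2 * (a - c) := by
    rw [hX1, hX2]; field_simp
  have hrel : (κ 2 * a + κ 4) * X1 = (κ 3 * a + κ 5) * X2 := by
    rw [hX1, hX2]; field_simp
  have hprod : κ 0 * a * X1 * X2 = κ 1 := by
    have h1 : 4 * κ 0 * a * (a - c) ^ 2 * ((κ 3 * a + κ 5) * (κ 2 * a + κ 4))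
        = κ 1 * ((κ 3 * a + κ 5) + (κ 2 * a + κ 4)) ^ 2 := by
      have := sub_eq_zero.mp hφa
      rw [φq] at hφa
      have h2 := sub_eq_zero.mp hφa
      rw [div_eq_iff (pow_pos hS 2).ne'] at h2
      exact h2
    rw [hX1, hX2]
    field_simp
    linear_combination h1
  refine ⟨![a, X1, X2], ⟨?_, ?_, ?_⟩, ?_, ?_⟩
  · intro i; fin_cases i
    · simpa using ha0
    · simpa using hX1p
    · simpa using hX2p
  · show a = 1 / 2 * X1 + 1 / 2 * X2 + c
    linarith [hsum]
  · intro i; fin_cases i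
    · show -(κ 0) * a * X1 * X2 + κ 1 = 0
      linear_combination -hprod
    · show -(κ 0) * a * X1 * X2 - κ 2 * a * X1 + κ 3 * a * X2 - κ 4 * X1 + κ 5 * X2 + κ 1 = 0
      linear_combination -hprod - hrel
    · show -(κ 0) * a * X1 * X2 + κ 2 * a * X1 - κ 3 * a * X2 + κ 4 * X1 - κ 5 * X2 + κ 1 = 0
      linear_combination -hprod + hrel
  · -- determinant is positive
    have hdet : 0 < (jacH19 κ c ![a, X1, X2]).det := by
      rw [Matrix.det_fin_three, jac19_00, jac19_01, jac19_02, jac19_10, jac19_11, jac19_12,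
        jac19_20, jac19_21, jac19_22]
      simp only [Matrix.cons_val_zero, Matrix.cons_val_one, Matrix.head_cons,
        Matrix.cons_val_two, Matrix.tail_cons]
      have r1 : κ 4 * X1 < (κ 3 * a + κ 5) * X2 := by
        linarith [hrel, mul_pos (mul_pos hk2 ha0) hX1p]
      have r2 : κ 5 * X2 < (κ 2 * a + κ 4) * X1 := by
        linarith [hrel, mul_pos (mul_pos hk3 ha0) hX2p]
      have r1' := mul_lt_mul_of_pos_left (mul_lt_mul_of_pos_right r1 hX1p) hk0
      have r2' := mul_lt_mul_of_pos_left (mul_lt_mul_of_pos_right r2 hX2p) hk0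
      have p1 : 0 < κ 0 * a * X2 * (κ 3 * a + κ 5) := by positivity
      have p2 : 0 < κ 0 * a * X1 * (κ 2 * a + κ 4) := by positivity
      have p3 : 0 < κ 0 * κ 4 * X1 * X2 := by positivity
      have p4 : 0 < κ 0 * κ 5 * X1 * X2 := by positivity
      have hrel' : κ 0 * (X1 - X2) * ((κ 2 * a + κ 4) * X1)
          = κ 0 * (X1 - X2) * ((κ 3 * a + κ 5) * X2) := by rw [hrel]
      linarith [r1', r2', p1, p2, p3, p4, hrel']
    exact ne_of_gt hdet
  · -- uniqueness
    rintro y ⟨hypos, hyc, hyf⟩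
    have hy0 := hypos 0; have hy1 := hypos 1; have hy2 := hypos 2
    have hf0 := hyf 0; have hf1 := hyf 1
    simp only [f19, Matrix.cons_val_zero, Matrix.cons_val_one, Matrix.head_cons] at hf0 hf1
    have hyrel : (κ 2 * y 0 + κ 4) * y 1 = (κ 3 * y 0 + κ 5) * y 2 := by
      linarith [hf0, hf1]
    have hyprod : κ 0 * y 0 * y 1 * y 2 = κ 1 := by linarith [hf0]
    have hy0c : c < y 0 := by
      rw [hyc]; linarith
    have hy0m : m < y 0 := by rw [hm]; exact max_lt hy0c hy0
    have hSy : 0 < (κ 3 * y 0 + κ 5) + (κ 2 * y 0 + κ 4) := by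
      linarith [mul_pos hk3 hy0, mul_pos hk2 hy0]
    have hy1f : y 1 = 2 * (y 0 - c) * (κ 3 * y 0 + κ 5) / ((κ 3 * y 0 + κ 5) + (κ 2 * y 0 + κ 4)) := by
      rw [eq_div_iff hSy.ne']
      linear_combination hyrel - 2 * (κ 3 * y 0 + κ 5) * hyc
    have hy2f : y 2 = 2 * (y 0 - c) * (κ 2 * y 0 + κ 4) / ((κ 3 * y 0 + κ 5) + (κ 2 * y 0 + κ 4)) := by
      rw [eq_div_iff hSy.ne']
      linear_combination -hyrel - 2 * (κ 2 * y 0 + κ 4) * hyc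
    have hφy : φq κ c (y 0) = 0 := by
      rw [φq, sub_eq_zero, div_eq_iff (pow_pos hSy 2).ne']
      rw [hy1f, hy2f] at hyprod
      field_simp at hyprod
      linear_combination hyprod
    have hy0a : y 0 = a :=
      hmono.injOn (Set.mem_Ici.mpr hy0m.le) (Set.mem_Ici.mpr ham.le) (hφy.trans hφa.symm)
    funext i; fin_cases i
    · show y 0 = a
      exact hy0a
    · show y 1 = X1
      rw [hy1f, hy0a, hX1]
    · show y 2 = X2
      rw [hy2f, hy0a, hX2]
end
end
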